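/- arXiv:1310.8360 — 2 statements merged into one kernel-verified Lean document; each statement's English description precedes it below -/
import Mathlib

section
/- Let β, γ : ℝ → ℝ be continuous positive functions with β(x) → β_∞ and γ(x) → γ_∞ as |x| → ∞, where β_∞ > γ_∞ > 0. Let d_I > 0 and define R(h) = sup over nonzero ψ ∈ H¹_0(-h, h) of (∫ β ψ²) / (∫ (d_I ψ'² + γ ψ²)). Then liminf_{h→∞} R(h) ≥ β_∞ / γ_∞. -/
open Set intervalIntegral Filter Topology

private lemma int_sq (a b : ℝ) : ∫ x in a..b, x ^ 2 = (b^3 - a^3)/3 := by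
  rw [integral_pow]; norm_num

private lemma int_psi_sq (h a b : ℝ) : ∫ x in a..b, (h^2 - x^2)^2
    = h^4*(b-a) - 2*h^2*(b^3-a^3)/3 + (b^5-a^5)/5 := by
  rw [intervalIntegral.integral_congr (g := fun x => h^4 + ((-(2*h^2)) * x^2 + x^4))
    (fun x _ => by ring)]
  rw [intervalIntegral.integral_add, intervalIntegral.integral_add,
    intervalIntegral.integral_const, intervalIntegral.integral_const_mul,
    integral_pow, integral_pow]
  · push_cast [smul_eq_mul]; ring
  · exact (continuous_const.mul (continuous_pow 2)).intervalIntegrable _ _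
  · exact (continuous_pow 4).intervalIntegrable _ _
  · exact continuous_const.intervalIntegrable _ _
  · exact ((continuous_const.mul (continuous_pow 2)).add
      ((continuous_pow 4))).intervalIntegrable _ _

private lemma deriv_psi (h : ℝ) : deriv (fun x : ℝ => h^2 - x^2) = fun x => -(2*x) := by
  funext x
  have : HasDerivAt (fun x : ℝ => h^2 - x^2) (-(2*x)) x := by
    simpa using (hasDerivAt_pow 2 x).const_sub (h^2)
  exact this.deriv

private lemma ratio_lb (β γ : ℝ → ℝ) (hβc : Continuous β) (hγc : Continuous γ)
    (hβp : ∀ x, 0 < β x) (hγp : ∀ x, 0 < γ x) (dI : ℝ) (hd : 0 < dI)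
    (Bγ : ℝ) (hBγ : ∀ x, γ x ≤ Bγ)
    (bε gε M : ℝ) (hbε : 0 ≤ bε) (hgε : 0 ≤ gε) (hM : 0 ≤ M)
    (hβM : ∀ x : ℝ, M ≤ |x| → bε ≤ β x) (hγM : ∀ x : ℝ, M ≤ |x| → γ x ≤ gε)
    (h : ℝ) (hh : M + 1 ≤ h) :
    (bε * (16*h^5/15 - 2*M*h^4)) / (dI*(8*h^3/3) + (gε*(16*h^5/15) + Bγ*(2*M*h^4)))
      ≤ (∫ x in (-h)..h, β x * ((h^2 - x^2)) ^ 2) /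
        (∫ x in (-h)..h, dI * (deriv (fun y : ℝ => h^2 - y^2) x) ^ 2 + γ x * ((h^2 - x^2)) ^ 2) := by
  have h0 : 0 < h := by linarith
  have hMh : M ≤ h := by linarith
  have hBγ0 : 0 < Bγ := (hγp 0).trans_le (hBγ 0)
  -- continuity / integrability facts
  have cψ2 : Continuous fun x : ℝ => (h^2 - x^2)^2 := by fun_prop
  have cβψ : Continuous fun x : ℝ => β x * (h^2 - x^2)^2 := by fun_prop
  have cγψ : Continuous fun x : ℝ => γ x * (h^2 - x^2)^2 := by fun_prop
  have iψ2 : ∀ a b : ℝ, IntervalIntegrable (fun x : ℝ => (h^2 - x^2)^2) MeasureTheory.volume a b :=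
    fun a b => cψ2.intervalIntegrable a b
  have iβψ : ∀ a b : ℝ, IntervalIntegrable (fun x : ℝ => β x * (h^2 - x^2)^2)
      MeasureTheory.volume a b := fun a b => cβψ.intervalIntegrable a b
  have iγψ : ∀ a b : ℝ, IntervalIntegrable (fun x : ℝ => γ x * (h^2 - x^2)^2)
      MeasureTheory.volume a b := fun a b => cγψ.intervalIntegrable a b
  -- splitting identities
  have splitψ : (∫ x in (-h)..(-M), (h^2 - x^2)^2) + ((∫ x in (-M)..M, (h^2 - x^2)^2)
      + (∫ x in M..h, (h^2 - x^2)^2)) = ∫ x in (-h)..h, (h^2 - x^2)^2 := by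
    rw [intervalIntegral.integral_add_adjacent_intervals (iψ2 _ _) (iψ2 _ _),
      intervalIntegral.integral_add_adjacent_intervals (iψ2 _ _) (iψ2 _ _)]
  have splitβ : (∫ x in (-h)..(-M), β x * (h^2 - x^2)^2)
      + ((∫ x in (-M)..M, β x * (h^2 - x^2)^2) + (∫ x in M..h, β x * (h^2 - x^2)^2))
      = ∫ x in (-h)..h, β x * (h^2 - x^2)^2 := by
    rw [intervalIntegral.integral_add_adjacent_intervals (iβψ _ _) (iβψ _ _),
      intervalIntegral.integral_add_adjacent_intervals (iβψ _ _) (iβψ _ _)]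
  have splitγ : (∫ x in (-h)..(-M), γ x * (h^2 - x^2)^2)
      + ((∫ x in (-M)..M, γ x * (h^2 - x^2)^2) + (∫ x in M..h, γ x * (h^2 - x^2)^2))
      = ∫ x in (-h)..h, γ x * (h^2 - x^2)^2 := by
    rw [intervalIntegral.integral_add_adjacent_intervals (iγψ _ _) (iγψ _ _),
      intervalIntegral.integral_add_adjacent_intervals (iγψ _ _) (iγψ _ _)]
  have hfull : (∫ x in (-h)..h, (h^2 - x^2)^2) = 16*h^5/15 := by rw [int_psi_sq]; ring
  -- middle bound for ψ²
  have hmid_ub : (∫ x in (-M)..M, (h^2 - x^2)^2) ≤ 2*M*h^4 := by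
    have : (∫ x in (-M)..M, (h^2 - x^2)^2) ≤ ∫ _x in (-M)..M, h^4 := by
      apply intervalIntegral.integral_mono_on (by linarith) (iψ2 _ _)
        (continuous_const.intervalIntegrable _ _)
      intro x hx
      have h1 : -M ≤ x := hx.1
      have h2 : x ≤ M := hx.2
      have hx2 : x^2 ≤ h^2 := by nlinarith
      nlinarith [sq_nonneg x, mul_nonneg (sq_nonneg x) (sub_nonneg.mpr hx2),
        mul_le_mul_of_nonneg_left hx2 (sq_nonneg h)]
    have hc : (∫ _x in (-M)..M, h^4 : ℝ) = 2*M*h^4 := by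
      rw [intervalIntegral.integral_const, smul_eq_mul]; ring
    rw [hc] at this
    exact this
  have hmid_nonneg : 0 ≤ ∫ x in (-M)..M, (h^2 - x^2)^2 :=
    intervalIntegral.integral_nonneg (by linarith) (fun x _ => sq_nonneg _)
  -- tail lower bounds for β integral
  have tail_left_β : bε * ∫ x in (-h)..(-M), (h^2 - x^2)^2
      ≤ ∫ x in (-h)..(-M), β x * (h^2 - x^2)^2 := by
    rw [← intervalIntegral.integral_const_mul]
    apply intervalIntegral.integral_mono_on (by linarith)
      ((continuous_const.mul cψ2).intervalIntegrable _ _) (iβψ _ _)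
    intro x hx
    have habs : M ≤ |x| := by
      rw [abs_of_nonpos (by linarith [hx.2] : x ≤ 0)]; linarith [hx.2]
    exact mul_le_mul_of_nonneg_right (hβM x habs) (sq_nonneg _)
  have tail_right_β : bε * ∫ x in M..h, (h^2 - x^2)^2
      ≤ ∫ x in M..h, β x * (h^2 - x^2)^2 := by
    rw [← intervalIntegral.integral_const_mul]
    apply intervalIntegral.integral_mono_on (by linarith)
      ((continuous_const.mul cψ2).intervalIntegrable _ _) (iβψ _ _)
    intro x hx
    have habs : M ≤ |x| := by rw [abs_of_nonneg (by linarith [hx.1] : 0 ≤ x)]; exact hx.1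
    exact mul_le_mul_of_nonneg_right (hβM x habs) (sq_nonneg _)
  have mid_β : 0 ≤ ∫ x in (-M)..M, β x * (h^2 - x^2)^2 :=
    intervalIntegral.integral_nonneg (by linarith)
      (fun x _ => mul_nonneg (hβp x).le (sq_nonneg _))
  -- tail upper bounds for γ integral
  have tail_left_γ : (∫ x in (-h)..(-M), γ x * (h^2 - x^2)^2)
      ≤ gε * ∫ x in (-h)..(-M), (h^2 - x^2)^2 := by
    rw [← intervalIntegral.integral_const_mul]
    apply intervalIntegral.integral_mono_on (by linarith) (iγψ _ _)
      ((continuous_const.mul cψ2).intervalIntegrable _ _)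
    intro x hx
    have habs : M ≤ |x| := by
      rw [abs_of_nonpos (by linarith [hx.2] : x ≤ 0)]; linarith [hx.2]
    exact mul_le_mul_of_nonneg_right (hγM x habs) (sq_nonneg _)
  have tail_right_γ : (∫ x in M..h, γ x * (h^2 - x^2)^2)
      ≤ gε * ∫ x in M..h, (h^2 - x^2)^2 := by
    rw [← intervalIntegral.integral_const_mul]
    apply intervalIntegral.integral_mono_on (by linarith) (iγψ _ _)
      ((continuous_const.mul cψ2).intervalIntegrable _ _)
    intro x hx
    have habs : M ≤ |x| := by rw [abs_of_nonneg (by linarith [hx.1] : 0 ≤ x)]; exact hx.1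
    exact mul_le_mul_of_nonneg_right (hγM x habs) (sq_nonneg _)
  have mid_γ : (∫ x in (-M)..M, γ x * (h^2 - x^2)^2)
      ≤ Bγ * ∫ x in (-M)..M, (h^2 - x^2)^2 := by
    rw [← intervalIntegral.integral_const_mul]
    apply intervalIntegral.integral_mono_on (by linarith) (iγψ _ _)
      ((continuous_const.mul cψ2).intervalIntegrable _ _)
    intro x _
    exact mul_le_mul_of_nonneg_right (hBγ x) (sq_nonneg _)
  -- tail ψ² nonneg
  have tail_left_nonneg : 0 ≤ ∫ x in (-h)..(-M), (h^2 - x^2)^2 :=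
    intervalIntegral.integral_nonneg (by linarith) (fun x _ => sq_nonneg _)
  have tail_right_nonneg : 0 ≤ ∫ x in M..h, (h^2 - x^2)^2 :=
    intervalIntegral.integral_nonneg (by linarith) (fun x _ => sq_nonneg _)
  -- numerator lower bound
  have hN : bε * (16*h^5/15 - 2*M*h^4) ≤ ∫ x in (-h)..h, β x * (h^2 - x^2)^2 := by
    rw [← splitβ]
    have htails : 16*h^5/15 - 2*M*h^4
        ≤ (∫ x in (-h)..(-M), (h^2 - x^2)^2) + ∫ x in M..h, (h^2 - x^2)^2 := by
      have := splitψ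
      rw [hfull] at this
      linarith [hmid_ub]
    calc bε * (16*h^5/15 - 2*M*h^4)
        ≤ bε * ((∫ x in (-h)..(-M), (h^2 - x^2)^2) + ∫ x in M..h, (h^2 - x^2)^2) :=
          mul_le_mul_of_nonneg_left htails hbε
      _ = bε * (∫ x in (-h)..(-M), (h^2 - x^2)^2) + bε * ∫ x in M..h, (h^2 - x^2)^2 := by ring
      _ ≤ _ := by linarith [tail_left_β, tail_right_β, mid_β]
  have hN0 : 0 ≤ ∫ x in (-h)..h, β x * (h^2 - x^2)^2 :=
    intervalIntegral.integral_nonneg (by linarith)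
      (fun x _ => mul_nonneg (hβp x).le (sq_nonneg _))
  -- γ integral upper bound
  have hG : (∫ x in (-h)..h, γ x * (h^2 - x^2)^2) ≤ gε*(16*h^5/15) + Bγ*(2*M*h^4) := by
    rw [← splitγ]
    have hsum : (∫ x in (-h)..(-M), (h^2 - x^2)^2) + (∫ x in M..h, (h^2 - x^2)^2)
        ≤ 16*h^5/15 := by
      have := splitψ
      rw [hfull] at this
      linarith [hmid_nonneg]
    have h1 : gε * ((∫ x in (-h)..(-M), (h^2 - x^2)^2) + ∫ x in M..h, (h^2 - x^2)^2)
        ≤ gε * (16*h^5/15) := mul_le_mul_of_nonneg_left hsum hgε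
    have h2 : Bγ * (∫ x in (-M)..M, (h^2 - x^2)^2) ≤ Bγ * (2*M*h^4) :=
      mul_le_mul_of_nonneg_left hmid_ub hBγ0.le
    nlinarith [tail_left_γ, tail_right_γ, mid_γ]
  -- rewrite the denominator
  have hder : (∫ x in (-h)..h, dI * (deriv (fun y : ℝ => h^2 - y^2) x) ^ 2
      + γ x * ((h^2 - x^2)) ^ 2)
      = dI*(8*h^3/3) + ∫ x in (-h)..h, γ x * (h^2 - x^2)^2 := by
    rw [intervalIntegral.integral_congr
      (g := fun x => dI*(-(2*x))^2 + γ x * (h^2-x^2)^2) (fun x _ => by simp only [deriv_psi])]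
    rw [intervalIntegral.integral_add
      ((by fun_prop : Continuous fun x : ℝ => dI * (-(2*x))^2).intervalIntegrable _ _) (iγψ _ _)]
    congr 1
    rw [intervalIntegral.integral_congr (g := fun x => (4*dI) * x^2) (fun x _ => by ring)]
    rw [intervalIntegral.integral_const_mul, int_sq]
    ring
  rw [hder]
  have hG0 : 0 ≤ ∫ x in (-h)..h, γ x * (h^2-x^2)^2 :=
    intervalIntegral.integral_nonneg (by linarith) (fun x _ => mul_nonneg (hγp x).le (sq_nonneg _))
  have hDpos : 0 < dI*(8*h^3/3) + ∫ x in (-h)..h, γ x * (h^2-x^2)^2 := by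
    have h3 : 0 < dI*(8*h^3/3) := by positivity
    linarith
  exact div_le_div₀ hN0 hN hDpos (by linarith [hG])

lemma cocompact_tail {s : Set ℝ} (hs : s ∈ cocompact ℝ) :
    ∃ M : ℝ, 0 ≤ M ∧ ∀ x : ℝ, M ≤ |x| → x ∈ s := by
  obtain ⟨K, hK, hKs⟩ := mem_cocompact.mp hs
  obtain ⟨r, hr⟩ := hK.isBounded.subset_closedBall 0
  refine ⟨max r 0 + 1, by positivity, fun x hx => ?_⟩
  apply hKs
  intro hxK
  have := hr hxK
  rw [Metric.mem_closedBall, Real.dist_eq, sub_zero] at this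
  have : |x| ≤ max r 0 := this.trans (le_max_left _ _)
  linarith [hx]

lemma bdd_of_cocompact {f : ℝ → ℝ} (hf : Continuous f) {L : ℝ}
    (h : Tendsto f (cocompact ℝ) (𝓝 L)) : ∃ C : ℝ, ∀ x, f x ≤ C := by
  obtain ⟨M, _, hM⟩ := cocompact_tail (h (Iio_mem_nhds (lt_add_one L)))
  obtain ⟨C, hC⟩ := (isCompact_Icc (a := -M) (b := M)).exists_bound_of_continuousOn
    hf.continuousOn
  refine ⟨max C (L + 1), fun x => ?_⟩
  rcases le_or_gt M |x| with hx | hx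
  · exact le_max_of_le_right (le_of_lt (hM x hx))
  · have hx' : x ∈ Icc (-M) M := abs_le.mp hx.le
    have := hC x hx'
    rw [Real.norm_eq_abs] at this
    exact le_max_of_le_left ((le_abs_self _).trans this)

lemma pos_lb_of_cocompact {f : ℝ → ℝ} (hf : Continuous f) (hfp : ∀ x, 0 < f x) {L : ℝ}
    (hL : 0 < L) (h : Tendsto f (cocompact ℝ) (𝓝 L)) : ∃ c : ℝ, 0 < c ∧ ∀ x, c ≤ f x := by
  obtain ⟨M, _, hM⟩ := cocompact_tail (h (Ioi_mem_nhds (half_lt_self hL)))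
  obtain ⟨z, _, hz⟩ := (isCompact_Icc (a := -M) (b := M)).exists_isMinOn
    (Set.nonempty_Icc.mpr (by linarith)) hf.continuousOn
  refine ⟨min (L/2) (f z), lt_min (by positivity) (hfp z), fun x => ?_⟩
  rcases le_or_gt M |x| with hx | hx
  · exact (min_le_left _ _).trans (le_of_lt (hM x hx))
  · exact (min_le_right _ _).trans (hz (abs_le.mp hx.le))

lemma set_bdd (β γ : ℝ → ℝ) (hβc : Continuous β) (hβp : ∀ x, 0 < β x)
    (dI : ℝ) (hd : 0 < dI) (Bβ cγ : ℝ) (hBβ : ∀ x, β x ≤ Bβ) (hcγ : 0 < cγ)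
    (hγlb : ∀ x, cγ ≤ γ x) (h : ℝ) (hh : 0 < h) :
    ∀ r ∈ {r : ℝ | ∃ ψ : ℝ → ℝ, ContDiffOn ℝ 1 ψ (Icc (-h) h) ∧
        ψ (-h) = 0 ∧ ψ h = 0 ∧ (∃ x ∈ Ioo (-h) h, ψ x ≠ 0) ∧
        r = (∫ x in (-h)..h, β x * (ψ x) ^ 2) /
            (∫ x in (-h)..h, dI * (deriv ψ x) ^ 2 + γ x * (ψ x) ^ 2)}, r ≤ Bβ / cγ := by
  intro r hr
  obtain ⟨ψ, hsm, -, -, -, hr⟩ := hr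
  have hBβ0 : 0 < Bβ := (hβp 0).trans_le (hBβ 0)
  have hhle : -h ≤ h := by linarith
  have huIcc : uIcc (-h) h = Icc (-h) h := uIcc_of_le hhle
  have hψc : ContinuousOn ψ (Icc (-h) h) := hsm.continuousOn
  have hiβ : IntervalIntegrable (fun x => β x * (ψ x)^2) MeasureTheory.volume (-h) h := by
    apply ContinuousOn.intervalIntegrable; rw [huIcc]; exact hβc.continuousOn.mul (hψc.pow 2)
  have hiBβ : IntervalIntegrable (fun x => Bβ * (ψ x)^2) MeasureTheory.volume (-h) h := by
    apply ContinuousOn.intervalIntegrable; rw [huIcc]; exact continuousOn_const.mul (hψc.pow 2)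
  have hicγ : IntervalIntegrable (fun x => cγ * (ψ x)^2) MeasureTheory.volume (-h) h := by
    apply ContinuousOn.intervalIntegrable; rw [huIcc]; exact continuousOn_const.mul (hψc.pow 2)
  set S := ∫ x in (-h)..h, (ψ x)^2 with hS
  have hS0 : 0 ≤ S := intervalIntegral.integral_nonneg hhle (fun x _ => sq_nonneg _)
  have hnum0 : 0 ≤ ∫ x in (-h)..h, β x * (ψ x)^2 :=
    intervalIntegral.integral_nonneg hhle (fun x _ => mul_nonneg (hβp x).le (sq_nonneg _))
  have hnumle : (∫ x in (-h)..h, β x * (ψ x)^2) ≤ Bβ * S := by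
    rw [hS, ← intervalIntegral.integral_const_mul]
    exact intervalIntegral.integral_mono_on hhle hiβ hiBβ
      (fun x _ => mul_le_mul_of_nonneg_right (hBβ x) (sq_nonneg _))
  by_cases hInt : IntervalIntegrable
      (fun x => dI * (deriv ψ x) ^ 2 + γ x * (ψ x) ^ 2) MeasureTheory.volume (-h) h
  · have hden_ge : cγ * S ≤ ∫ x in (-h)..h, dI * (deriv ψ x) ^ 2 + γ x * (ψ x) ^ 2 := by
      calc cγ * S = ∫ x in (-h)..h, cγ * (ψ x)^2 := by
            rw [hS, intervalIntegral.integral_const_mul]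
        _ ≤ _ := intervalIntegral.integral_mono_on hhle hicγ hInt (fun x _ => by
            have h1 : 0 ≤ dI * (deriv ψ x)^2 := by positivity
            have h2 : cγ * (ψ x)^2 ≤ γ x * (ψ x)^2 :=
              mul_le_mul_of_nonneg_right (hγlb x) (sq_nonneg _)
            linarith)
    rcases hS0.eq_or_lt with hS0' | hSpos
    · have hnum : (∫ x in (-h)..h, β x * (ψ x)^2) = 0 :=
        le_antisymm (hnumle.trans (by rw [← hS0', mul_zero])) hnum0
      rw [hr, hnum, zero_div]
      positivity
    · have hdpos : 0 < ∫ x in (-h)..h, dI * (deriv ψ x) ^ 2 + γ x * (ψ x) ^ 2 :=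
        lt_of_lt_of_le (by positivity) hden_ge
      rw [hr]
      calc (∫ x in (-h)..h, β x * (ψ x)^2) /
            (∫ x in (-h)..h, dI * (deriv ψ x) ^ 2 + γ x * (ψ x) ^ 2)
          ≤ (Bβ * S) / (cγ * S) := div_le_div₀ (by positivity) hnumle (mul_pos hcγ hSpos) hden_ge
        _ = Bβ / cγ := mul_div_mul_right _ _ hSpos.ne'
  · rw [hr, intervalIntegral.integral_undef hInt, div_zero]
    positivity

lemma mem_set (β γ : ℝ → ℝ) (dI : ℝ) (h : ℝ) (hh : 0 < h) :
    ((∫ x in (-h)..h, β x * ((h^2 - x^2)) ^ 2) /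
      (∫ x in (-h)..h, dI * (deriv (fun y : ℝ => h^2 - y^2) x) ^ 2 + γ x * ((h^2 - x^2)) ^ 2))
    ∈ {r : ℝ | ∃ ψ : ℝ → ℝ, ContDiffOn ℝ 1 ψ (Icc (-h) h) ∧
        ψ (-h) = 0 ∧ ψ h = 0 ∧ (∃ x ∈ Ioo (-h) h, ψ x ≠ 0) ∧
        r = (∫ x in (-h)..h, β x * (ψ x) ^ 2) /
            (∫ x in (-h)..h, dI * (deriv ψ x) ^ 2 + γ x * (ψ x) ^ 2)} := by
  refine ⟨fun x => h^2 - x^2, (contDiff_const.sub (contDiff_id.pow 2)).contDiffOn, by ring,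
    by ring, ⟨0, ⟨by linarith, hh⟩, by simpa using (by positivity : (0:ℝ) < h^2).ne'⟩, rfl⟩

lemma LB_tendsto (bε gε M Bγ dI : ℝ) (hgε : 0 < gε) (hd : 0 < dI) (hM : 0 ≤ M) (hBγ : 0 < Bγ) :
    Tendsto (fun h : ℝ => (bε * (16*h^5/15 - 2*M*h^4))
      / (dI*(8*h^3/3) + (gε*(16*h^5/15) + Bγ*(2*M*h^4)))) atTop (𝓝 (bε/gε)) := by
  have hg : ContinuousAt (fun t : ℝ => (bε * (16/15 - 2*M*t))
      / (dI*(8/3)*t^2 + (gε*(16/15) + Bγ*(2*M)*t))) 0 := by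
    apply ContinuousAt.div (by fun_prop) (by fun_prop)
    norm_num
    positivity
  have hcomp : Tendsto (fun h : ℝ => (bε * (16/15 - 2*M*h⁻¹))
      / (dI*(8/3)*(h⁻¹)^2 + (gε*(16/15) + Bγ*(2*M)*h⁻¹))) atTop
      (𝓝 ((bε * (16/15 - 2*M*(0:ℝ))) / (dI*(8/3)*(0:ℝ)^2 + (gε*(16/15) + Bγ*(2*M)*(0:ℝ))))) :=
    hg.tendsto.comp tendsto_inv_atTop_zero
  have hval : (bε * (16/15 - 2*M*(0:ℝ))) / (dI*(8/3)*(0:ℝ)^2 + (gε*(16/15) + Bγ*(2*M)*(0:ℝ)))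
      = bε / gε := by
    rw [show (bε * (16/15 - 2*M*(0:ℝ))) = bε * (16/15) by ring,
      show (dI*(8/3)*(0:ℝ)^2 + (gε*(16/15) + Bγ*(2*M)*(0:ℝ))) = gε * (16/15) by ring]
    rw [mul_div_mul_right _ _ (by norm_num)]
  rw [hval] at hcomp
  apply hcomp.congr'
  filter_upwards [eventually_gt_atTop (0:ℝ)] with h hh
  have h1 : 0 < h⁻¹ := inv_pos.mpr hh
  have d1 : 0 < dI*(8/3)*(h⁻¹)^2 + (gε*(16/15) + Bγ*(2*M)*h⁻¹) := by
    have e1 := mul_pos hd (pow_pos h1 2)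
    have e2 := mul_nonneg (mul_nonneg hBγ.le (by linarith : (0:ℝ) ≤ 2*M)) h1.le
    nlinarith
  have d2 : 0 < dI*(8*h^3/3) + (gε*(16*h^5/15) + Bγ*(2*M*h^4)) := by
    have e1 := mul_pos hd (pow_pos hh 3)
    have e2 := mul_nonneg (mul_nonneg hBγ.le (by linarith : (0:ℝ) ≤ 2*M)) (pow_pos hh 4).le
    have e3 := mul_pos hgε (pow_pos hh 5)
    nlinarith
  rw [div_eq_div_iff d1.ne' d2.ne']
  have : h ≠ 0 := hh.ne'
  field_simp

/-- if β → β_∞, γ → γ_∞ as |x| → ∞ with β_∞ > γ_∞ > 0, then the Dirichlet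
basic reproduction number R(h) on (-h,h) satisfies liminf_{h→∞} R(h) ≥ β_∞/γ_∞. -/
theorem liminf_R0D_large_domain (β γ : ℝ → ℝ) (hβc : Continuous β) (hγc : Continuous γ)
    (hβp : ∀ x, 0 < β x) (hγp : ∀ x, 0 < γ x)
    (βinf γinf : ℝ)
    (hβlim : Tendsto β (cocompact ℝ) (𝓝 βinf))
    (hγlim : Tendsto γ (cocompact ℝ) (𝓝 γinf))
    (hβγ : βinf > γinf) (hγinf : 0 < γinf)
    (dI : ℝ) (hd : 0 < dI)
    (R : ℝ → ℝ)
    (hR : ∀ h : ℝ, 0 < h → R h =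
      sSup {r : ℝ | ∃ ψ : ℝ → ℝ, ContDiffOn ℝ 1 ψ (Icc (-h) h) ∧
        ψ (-h) = 0 ∧ ψ h = 0 ∧ (∃ x ∈ Ioo (-h) h, ψ x ≠ 0) ∧
        r = (∫ x in (-h)..h, β x * (ψ x) ^ 2) /
            (∫ x in (-h)..h, dI * (deriv ψ x) ^ 2 + γ x * (ψ x) ^ 2)}) :
    βinf / γinf ≤ liminf R atTop := by
  obtain ⟨Bβ, hBβ⟩ := bdd_of_cocompact hβc hβlim
  obtain ⟨Bγ, hBγ⟩ := bdd_of_cocompact hγc hγlim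
  obtain ⟨cγ, hcγ0, hcγ⟩ := pos_lb_of_cocompact hγc hγp hγinf hγlim
  have hBβ0 : 0 < Bβ := (hβp 0).trans_le (hBβ 0)
  have hBγ0 : 0 < Bγ := (hγp 0).trans_le (hBγ 0)
  have hRub : ∀ᶠ h in atTop, R h ≤ Bβ / cγ := by
    filter_upwards [eventually_gt_atTop (0:ℝ)] with h hh
    rw [hR h hh]
    exact csSup_le ⟨_, mem_set β γ dI h hh⟩
      (set_bdd β γ hβc hβp dI hd Bβ cγ hBβ hcγ0 hcγ h hh)
  have hcob : IsCoboundedUnder (· ≥ ·) atTop R :=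
    IsBoundedUnder.isCoboundedUnder_ge ⟨Bβ/cγ, eventually_map.mpr hRub⟩
  have key : ∀ b : ℝ, b < βinf/γinf → b ≤ liminf R atTop := by
    intro b hb
    have hcont : ContinuousAt (fun ε : ℝ => (βinf - ε)/(γinf + ε)) 0 := by
      apply ContinuousAt.div (by fun_prop) (by fun_prop)
      norm_num
      exact hγinf.ne'
    have hev : ∀ᶠ ε in 𝓝 (0:ℝ), b < (βinf - ε)/(γinf + ε) :=
      hcont.tendsto.eventually_const_lt (by norm_num [hb])
    have hex : ∃ ε : ℝ, 0 < ε ∧ ε < γinf ∧ b < (βinf - ε)/(γinf + ε) := by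
      have h1 : ∀ᶠ ε in 𝓝[>] (0:ℝ), b < (βinf - ε)/(γinf + ε) :=
        eventually_nhdsWithin_of_eventually_nhds hev
      have h2 : ∀ᶠ ε in 𝓝[>] (0:ℝ), ε < γinf :=
        eventually_nhdsWithin_of_eventually_nhds (Filter.Tendsto.eventually_lt_const hγinf
          (by exact tendsto_id))
      have h3 : ∀ᶠ ε in 𝓝[>] (0:ℝ), (0:ℝ) < ε := eventually_mem_nhdsWithin
      obtain ⟨ε, hε1, hε2, hε3⟩ := (h3.and (h2.and h1)).exists
      exact ⟨ε, hε1, hε2, hε3⟩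
    obtain ⟨ε, hε0, hεγ, hεb⟩ := hex
    obtain ⟨M₁, hM₁0, hM₁⟩ := cocompact_tail (hβlim (Ioi_mem_nhds
      (by linarith : βinf - ε < βinf)))
    obtain ⟨M₂, hM₂0, hM₂⟩ := cocompact_tail (hγlim (Iio_mem_nhds
      (by linarith : γinf < γinf + ε)))
    set M := max M₁ M₂ with hM
    have hM0 : 0 ≤ M := le_trans hM₁0 (le_max_left _ _)
    have hβM : ∀ x : ℝ, M ≤ |x| → βinf - ε ≤ β x := fun x hx =>
      (hM₁ x (le_trans (le_max_left _ _) hx)).le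
    have hγM : ∀ x : ℝ, M ≤ |x| → γ x ≤ γinf + ε := fun x hx =>
      (hM₂ x (le_trans (le_max_right _ _) hx)).le
    have hT := LB_tendsto (βinf - ε) (γinf + ε) M Bγ dI (by linarith) hd hM0 hBγ0
    have hevLB := hT.eventually_const_lt hεb
    have hev2 : ∀ᶠ h in atTop, b ≤ R h := by
      filter_upwards [hevLB, eventually_ge_atTop (M+1), eventually_gt_atTop (0:ℝ)]
        with h h1 h2 h3
      have hrle := ratio_lb β γ hβc hγc hβp hγp dI hd Bγ hBγ (βinf - ε) (γinf + ε) M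
        (by linarith) (by linarith) hM0 hβM hγM h h2
      have hbdd : BddAbove {r : ℝ | ∃ ψ : ℝ → ℝ, ContDiffOn ℝ 1 ψ (Icc (-h) h) ∧
          ψ (-h) = 0 ∧ ψ h = 0 ∧ (∃ x ∈ Ioo (-h) h, ψ x ≠ 0) ∧
          r = (∫ x in (-h)..h, β x * (ψ x) ^ 2) /
              (∫ x in (-h)..h, dI * (deriv ψ x) ^ 2 + γ x * (ψ x) ^ 2)} :=
        ⟨Bβ/cγ, fun r hr => set_bdd β γ hβc hβp dI hd Bβ cγ hBβ hcγ0 hcγ h h3 r hr⟩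
      have hle : ((∫ x in (-h)..h, β x * ((h^2 - x^2)) ^ 2) /
          (∫ x in (-h)..h, dI * (deriv (fun y : ℝ => h^2 - y^2) x) ^ 2
            + γ x * ((h^2 - x^2)) ^ 2)) ≤ R h := by
        rw [hR h h3]
        exact le_csSup hbdd (mem_set β γ dI h h3)
      linarith [hrle, h1, hle]
    exact le_liminf_of_le hcob hev2
  by_contra hcon
  push_neg at hcon
  obtain ⟨b, hb1, hb2⟩ := exists_between hcon
  linarith [key b hb2]
end

section
/- Let β, γ : ℝ → ℝ be continuous with β bounded, γ ≥ γ_min > 0, and suppose β(x) ≤ γ(x) for all x (all sites are low-risk). Then for every bounded open interval Ω and every d_I > 0, the basic reproduction number R_0^D(Ω, d_I) = sup over nonzero φ ∈ H¹_0(Ω) of (∫_Ω β φ²)/(∫_Ω (d_I φ'² + γ φ²)) satisfies R_0^D < 1. -/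
open Set intervalIntegral

/-- Cauchy–Schwarz for interval integrals of a continuous function, via monotonicity. -/
lemma cs_interval (Ψ : ℝ → ℝ) (hΨ : Continuous Ψ) (a x : ℝ) (hax : a ≤ x) :
    (∫ t in a..x, Ψ t) ^ 2 ≤ (x - a) * ∫ t in a..x, (Ψ t) ^ 2 := by
  set G : ℝ → ℝ := fun y => (y - a) * (∫ t in a..y, (Ψ t) ^ 2) - (∫ t in a..y, Ψ t) ^ 2 with hGdef
  have hΨ2 : Continuous fun t => (Ψ t) ^ 2 := hΨ.pow 2
  have hI1 : ∀ y, HasDerivAt (fun u => ∫ t in a..u, Ψ t) (Ψ y) y := fun y =>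
    (hΨ.integral_hasStrictDerivAt a y).hasDerivAt
  have hI2 : ∀ y, HasDerivAt (fun u => ∫ t in a..u, (Ψ t) ^ 2) ((Ψ y) ^ 2) y := fun y =>
    (hΨ2.integral_hasStrictDerivAt a y).hasDerivAt
  have hG : ∀ y, HasDerivAt G
      ((∫ t in a..y, (Ψ t) ^ 2) + (y - a) * (Ψ y) ^ 2
        - 2 * (∫ t in a..y, Ψ t) * Ψ y) y := by
    intro y
    have h1 : HasDerivAt (fun u : ℝ => (u - a) * (∫ t in a..u, (Ψ t) ^ 2))
        (1 * (∫ t in a..y, (Ψ t) ^ 2) + (y - a) * (Ψ y) ^ 2) y :=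
      ((hasDerivAt_id y).sub_const a).mul (hI2 y)
    have h2 : HasDerivAt (fun u : ℝ => (∫ t in a..u, Ψ t) ^ 2)
        (2 * (∫ t in a..y, Ψ t) * Ψ y) y := by
      have := (hI1 y).fun_pow 2
      simpa using this
    have := h1.fun_sub h2
    exact this.congr_deriv (by ring)
  have hGdiff : Differentiable ℝ G := fun y => (hG y).differentiableAt
  have hmono : MonotoneOn G (Ici a) := by
    apply monotoneOn_of_deriv_nonneg (convex_Ici a) hGdiff.continuous.continuousOn
      (fun y _ => (hGdiff y).differentiableWithinAt)
    intro y hy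
    rw [interior_Ici] at hy
    rw [(hG y).deriv]
    have hkey : (∫ t in a..y, (Ψ t - Ψ y) ^ 2)
        = (∫ t in a..y, (Ψ t) ^ 2) + (y - a) * (Ψ y) ^ 2 - 2 * (∫ t in a..y, Ψ t) * Ψ y := by
      have expand : (fun t => (Ψ t - Ψ y) ^ 2)
          = fun t => ((Ψ t) ^ 2 - (2 * Ψ y) * Ψ t) + (Ψ y) ^ 2 := by
        funext t; ring
      rw [expand, intervalIntegral.integral_add
        ((by fun_prop : Continuous fun t => (Ψ t) ^ 2 - (2 * Ψ y) * Ψ t).intervalIntegrable a y)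
        (intervalIntegrable_const),
        intervalIntegral.integral_sub (hΨ2.intervalIntegrable a y)
        ((by fun_prop : Continuous fun t => (2 * Ψ y) * Ψ t).intervalIntegrable a y),
        intervalIntegral.integral_const_mul, intervalIntegral.integral_const]
      simp only [smul_eq_mul]
      ring
    rw [← hkey]
    exact intervalIntegral.integral_nonneg (le_of_lt hy) (fun t _ => sq_nonneg _)
  have hGa : G a = 0 := by simp [hGdef]
  have := hmono (self_mem_Ici) (mem_Ici.mpr hax) hax
  rw [hGa] at this
  simpa [hGdef, sub_nonneg] using this

/-- if all sites are low-risk (β ≤ γ pointwise), then R_0^D < 1 for every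
bounded interval and every diffusion rate d_I > 0. -/
theorem R0D_lt_one_of_low_risk (β γ : ℝ → ℝ) (hβc : Continuous β) (hγc : Continuous γ)
    (B : ℝ) (hβb : ∀ x, β x ≤ B)
    (γmin : ℝ) (hγmin : 0 < γmin) (hγlb : ∀ x, γmin ≤ γ x)
    (hlow : ∀ x, β x ≤ γ x)
    (g0 h0 dI : ℝ) (hΩ : g0 < h0) (hd : 0 < dI) :
    sSup {r : ℝ | ∃ φ : ℝ → ℝ, ContDiffOn ℝ 1 φ (Icc g0 h0) ∧
        φ g0 = 0 ∧ φ h0 = 0 ∧ (∃ x ∈ Ioo g0 h0, φ x ≠ 0) ∧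
        r = (∫ x in g0..h0, β x * (φ x) ^ 2) /
            (∫ x in g0..h0, dI * (deriv φ x) ^ 2 + γ x * (φ x) ^ 2)} < 1 := by
  set L : ℝ := h0 - g0 with hL
  have hLpos : 0 < L := sub_pos.mpr hΩ
  set B' : ℝ := max B 0 with hB'
  have hB'0 : 0 ≤ B' := le_max_right _ _
  set M : ℝ := B' * L ^ 2 with hM
  have hM0 : 0 ≤ M := by positivity
  set c : ℝ := M / (dI + M) with hc
  have hc0 : 0 ≤ c := by positivity
  have hc1 : c < 1 := by
    rw [hc, div_lt_one (by linarith)]; linarith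
  refine lt_of_le_of_lt (Real.sSup_le ?_ hc0) hc1
  rintro r ⟨φ, hφ, hφg, hφh, ⟨x0, hx0, hx0ne⟩, rfl⟩
  have huIcc : uIcc g0 h0 = Icc g0 h0 := uIcc_of_le hΩ.le
  have hφcont : ContinuousOn φ (Icc g0 h0) := hφ.continuousOn
  -- the derivative within, extended continuously to ℝ by clamping
  set ψ : ℝ → ℝ := derivWithin φ (Icc g0 h0) with hψ
  have hψcont : ContinuousOn ψ (Icc g0 h0) :=
    hφ.continuousOn_derivWithin (uniqueDiffOn_Icc hΩ) le_rfl
  set cl : ℝ → ℝ := fun x => max g0 (min x h0) with hcl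
  have hclcont : Continuous cl := continuous_const.max (continuous_id.min continuous_const)
  have hclmem : ∀ x, cl x ∈ Icc g0 h0 := by
    intro x
    constructor
    · exact le_max_left _ _
    · exact max_le (hΩ.le) (min_le_right _ _)
  have hcleq : ∀ x ∈ Icc g0 h0, cl x = x := by
    intro x hx
    simp [hcl, min_eq_left hx.2, max_eq_right hx.1]
  set Ψ : ℝ → ℝ := fun x => ψ (cl x) with hΨdef
  have hΨcont : Continuous Ψ := hψcont.comp_continuous hclcont hclmem
  have hΨeq : ∀ x ∈ Icc g0 h0, Ψ x = ψ x := fun x hx => by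
    simp [hΨdef, hcleq x hx]
  -- on the open interval, deriv φ = Ψ
  have hderiv_eq : ∀ x ∈ Ioo g0 h0, deriv φ x = Ψ x := by
    intro x hx
    have hnhds : Icc g0 h0 ∈ nhds x := Icc_mem_nhds hx.1 hx.2
    rw [hΨeq x (Ioo_subset_Icc_self hx), hψ, derivWithin_of_mem_nhds hnhds]
  have hhasderiv : ∀ x ∈ Ioo g0 h0, HasDerivAt φ (Ψ x) x := by
    intro x hx
    have hnhds : Icc g0 h0 ∈ nhds x := Icc_mem_nhds hx.1 hx.2
    have hdiff : DifferentiableAt ℝ φ x :=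
      ((hφ.differentiableOn one_ne_zero) x (Ioo_subset_Icc_self hx)).differentiableAt hnhds
    have := hdiff.hasDerivAt
    rwa [hderiv_eq x hx] at this
  -- FTC: φ x = ∫ t in g0..x, Ψ t for x ∈ Icc
  have hFTC : ∀ x ∈ Icc g0 h0, φ x = ∫ t in g0..x, Ψ t := by
    intro x hx
    have := intervalIntegral.integral_eq_sub_of_hasDeriv_right_of_le hx.1
      (hφcont.mono (Icc_subset_Icc le_rfl hx.2))
      (fun t ht => (hhasderiv t ⟨ht.1, lt_of_lt_of_le ht.2 hx.2⟩).hasDerivWithinAt)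
      (hΨcont.intervalIntegrable g0 x)
    rw [this, hφg, sub_zero]
  set A : ℝ := ∫ x in g0..h0, (Ψ x) ^ 2 with hA
  have hA0 : 0 ≤ A := intervalIntegral.integral_nonneg hΩ.le (fun t _ => sq_nonneg _)
  -- pointwise Poincaré bound
  have hpoin : ∀ x ∈ Icc g0 h0, (φ x) ^ 2 ≤ L * A := by
    intro x hx
    rw [hFTC x hx]
    have h1 : (∫ t in g0..x, Ψ t) ^ 2 ≤ (x - g0) * ∫ t in g0..x, (Ψ t) ^ 2 :=
      cs_interval Ψ hΨcont g0 x hx.1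
    have h2 : (∫ t in g0..x, (Ψ t) ^ 2) ≤ A := by
      have hsplit : (∫ t in g0..x, (Ψ t) ^ 2) + (∫ t in x..h0, (Ψ t) ^ 2) = A :=
        intervalIntegral.integral_add_adjacent_intervals
          ((hΨcont.pow 2).intervalIntegrable g0 x) ((hΨcont.pow 2).intervalIntegrable x h0)
      have hnn : 0 ≤ ∫ t in x..h0, (Ψ t) ^ 2 :=
        intervalIntegral.integral_nonneg hx.2 (fun t _ => sq_nonneg _)
      linarith
    have h3 : 0 ≤ ∫ t in g0..x, (Ψ t) ^ 2 :=
      intervalIntegral.integral_nonneg hx.1 (fun t _ => sq_nonneg _)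
    calc (∫ t in g0..x, Ψ t) ^ 2 ≤ (x - g0) * ∫ t in g0..x, (Ψ t) ^ 2 := h1
      _ ≤ L * A := by
          apply mul_le_mul (by simp [hL]; linarith [hx.2]) h2 h3 hLpos.le
  -- positivity of A
  have hApos : 0 < A := by
    have := hpoin x0 (Ioo_subset_Icc_self hx0)
    have hφx0 : 0 < (φ x0) ^ 2 := by positivity
    nlinarith
  -- integrability facts
  have hφ2int : IntervalIntegrable (fun x => (φ x) ^ 2) MeasureTheory.volume g0 h0 :=
    ((hφcont.pow 2).mono huIcc.subset).intervalIntegrable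
  have hB'φint : IntervalIntegrable (fun x => B' * (φ x) ^ 2) MeasureTheory.volume g0 h0 :=
    ((continuousOn_const.mul (hφcont.pow 2)).mono huIcc.subset).intervalIntegrable
  have hβφint : IntervalIntegrable (fun x => β x * (φ x) ^ 2) MeasureTheory.volume g0 h0 :=
    ((hβc.continuousOn.mul (hφcont.pow 2)).mono huIcc.subset).intervalIntegrable
  have hγφint : IntervalIntegrable (fun x => γ x * (φ x) ^ 2) MeasureTheory.volume g0 h0 :=
    ((hγc.continuousOn.mul (hφcont.pow 2)).mono huIcc.subset).intervalIntegrable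
  set N : ℝ := ∫ x in g0..h0, β x * (φ x) ^ 2 with hN
  set P : ℝ := ∫ x in g0..h0, γ x * (φ x) ^ 2 with hP
  set S2 : ℝ := ∫ x in g0..h0, (φ x) ^ 2 with hS2
  have hP0 : 0 ≤ P := intervalIntegral.integral_nonneg hΩ.le
    (fun t _ => mul_nonneg (le_trans hγmin.le (hγlb t)) (sq_nonneg _))
  have hNP : N ≤ P := intervalIntegral.integral_mono_on hΩ.le hβφint hγφint
    (fun x _ => mul_le_mul_of_nonneg_right (hlow x) (sq_nonneg _))
  -- N ≤ M * A
  have hNS2 : N ≤ B' * S2 := by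
    have heq : B' * S2 = ∫ x in g0..h0, B' * (φ x) ^ 2 :=
      (intervalIntegral.integral_const_mul B' _).symm
    rw [heq]
    exact intervalIntegral.integral_mono_on hΩ.le hβφint hB'φint
      (fun x _ => mul_le_mul_of_nonneg_right ((hβb x).trans (le_max_left B 0)) (sq_nonneg _))
  have hS2LA : S2 ≤ L * (L * A) := by
    have hconst : (∫ (_ : ℝ) in g0..h0, L * A) = L * (L * A) := by
      rw [intervalIntegral.integral_const, smul_eq_mul, ← hL]
    rw [← hconst]
    exact intervalIntegral.integral_mono_on hΩ.le hφ2int intervalIntegrable_const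
      (fun x hx => hpoin x hx)
  have hNMA : N ≤ M * A := by
    calc N ≤ B' * S2 := hNS2
      _ ≤ B' * (L * (L * A)) := by
          exact mul_le_mul_of_nonneg_left hS2LA hB'0
      _ = M * A := by rw [hM]; ring
  -- the denominator equals dI * A + P
  have hDen : (∫ x in g0..h0, dI * (deriv φ x) ^ 2 + γ x * (φ x) ^ 2) = dI * A + P := by
    have hae : ∀ᵐ x ∂(MeasureTheory.volume : MeasureTheory.Measure ℝ),
        x ∈ Set.uIoc g0 h0 → dI * (deriv φ x) ^ 2 + γ x * (φ x) ^ 2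
          = dI * (Ψ x) ^ 2 + γ x * (φ x) ^ 2 := by
      have hne : ∀ᵐ x ∂(MeasureTheory.volume : MeasureTheory.Measure ℝ), x ∉ ({h0} : Set ℝ) :=
        MeasureTheory.measure_eq_zero_iff_ae_notMem.mp Real.volume_singleton
      filter_upwards [hne] with x hx hmem
      rw [uIoc_of_le hΩ.le] at hmem
      have hxIoo : x ∈ Ioo g0 h0 := ⟨hmem.1, lt_of_le_of_ne hmem.2 (by simpa using hx)⟩
      rw [hderiv_eq x hxIoo]
    rw [intervalIntegral.integral_congr_ae hae,
      intervalIntegral.integral_add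
        ((by fun_prop : Continuous fun x => dI * (Ψ x) ^ 2).intervalIntegrable g0 h0) hγφint,
      intervalIntegral.integral_const_mul]
  rw [hDen]
  have hDpos : 0 < dI * A + P := by nlinarith
  rw [div_le_iff₀ hDpos, hc, div_mul_eq_mul_div, le_div_iff₀ (by linarith : (0:ℝ) < dI + M)]
  nlinarith [mul_le_mul_of_nonneg_left hNP hM0, mul_le_mul_of_nonneg_left hNMA hd.le]
end
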